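/- For n ≥ 3 and all a₁,…,aₙ > 0, the integral ∫_0^∞ t ∏_{i=1}^n aᵢ sinc(aᵢ t) dt = ∫_0^∞ t^{1−n} ∏_{i=1}^n sin(aᵢ t) dt is nonnegative. -/

import Mathlib

open MeasureTheory Real Set

noncomputable def sinc (t : ℝ) : ℝ := if t = 0 then 1 else Real.sin t / t

lemma sinc_eq {t : ℝ} (ht : t ≠ 0) : _root_.sinc t = Real.sin t / t := if_neg ht

lemma abs_sinc_le_one (t : ℝ) : |_root_.sinc t| ≤ 1 := by
  rcases eq_or_ne t 0 with h | h
  · simp [_root_.sinc, h]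
  · rw [sinc_eq h, abs_div, div_le_one (abs_pos.2 h)]
    exact Real.abs_sin_le_abs

lemma measurable_sinc : Measurable _root_.sinc := by
  unfold _root_.sinc
  exact Measurable.ite (measurableSet_eq) measurable_const ((Real.measurable_sin).div measurable_id)

lemma sin_mul_sinc (b y t : ℝ) (hb : 0 < b) :
    Real.sin (y*t) * (b * _root_.sinc (b*t)) = ∫ z in (y-b)..(y+b), Real.sin (z*t) / 2 := by
  rcases eq_or_ne t 0 with rfl | ht
  · simp
  · have hbt : b * t ≠ 0 := mul_ne_zero hb.ne' ht
    rw [sinc_eq hbt]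
    have : ∫ z in (y-b)..(y+b), Real.sin (z*t) / 2
        = (1/2) * (t⁻¹ * (Real.cos ((y-b)*t) - Real.cos ((y+b)*t))) := by
      rw [intervalIntegral.integral_div, intervalIntegral.integral_comp_mul_right _ ht,
        integral_sin]
      ring_nf
    rw [this, Real.cos_sub_cos]
    have h1 : ((y-b)*t + (y+b)*t)/2 = y*t := by ring
    have h2 : ((y-b)*t - (y+b)*t)/2 = -(b*t) := by ring
    rw [h1, h2, Real.sin_neg]
    field_simp


structure IsRep (f : ℝ → ℝ) (ν : ℝ → ℝ) : Prop where
  integrable : Integrable ν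
  measurable : Measurable ν
  nonneg : ∀ y, 0 ≤ ν y
  fold : ∀ y, 0 ≤ y → ν (-y) ≤ ν y
  supp : ∃ R, ∀ y, R < |y| → ν y = 0
  rep : ∀ t, f t = ∫ y, ν y * Real.sin (y * t)

noncomputable def conv1 (ν : ℝ → ℝ) (b : ℝ) (z : ℝ) : ℝ := (∫ y in (z-b)..(z+b), ν y) / 2

lemma conv1_cont (ν : ℝ → ℝ) (b : ℝ) (hν : Integrable ν) : Continuous (conv1 ν b) := by
  have hii : ∀ a c : ℝ, IntervalIntegrable ν volume a c := fun a c => hν.intervalIntegrable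
  have h1 : ∀ z : ℝ, conv1 ν b z = ((∫ y in (0:ℝ)..(z+b), ν y) - ∫ y in (0:ℝ)..(z-b), ν y) / 2 := by
    intro z
    unfold conv1
    rw [← intervalIntegral.integral_add_adjacent_intervals (hii 0 (z-b)) (hii (z-b) (z+b))]
    ring
  simp only [funext h1]
  have hc := intervalIntegral.continuous_primitive hii 0
  exact (((hc.comp (continuous_id.add continuous_const)).sub
    (hc.comp (continuous_id.sub continuous_const))).div_const 2)

lemma conv1_nonneg (ν : ℝ → ℝ) {b : ℝ} (hb : 0 < b) (h : ∀ y, 0 ≤ ν y) (z : ℝ) :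
    0 ≤ conv1 ν b z := by
  unfold conv1
  have : (0:ℝ) ≤ ∫ y in (z-b)..(z+b), ν y :=
    intervalIntegral.integral_nonneg (by linarith) (fun u _ => h u)
  linarith

lemma odd_interval_zero {D : ℝ → ℝ} (hD : ∀ y, D (-y) = - D y) (c : ℝ) :
    ∫ y in (-c)..c, D y = 0 := by
  have h := intervalIntegral.integral_comp_neg D (a := -c) (b := c)
  simp only [neg_neg, hD] at h
  rw [intervalIntegral.integral_neg] at h
  linarith

lemma conv1_fold (ν : ℝ → ℝ) {b : ℝ} (hb : 0 < b) (hν : Integrable ν)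
    (hfold : ∀ y, 0 ≤ y → ν (-y) ≤ ν y) {z : ℝ} (hz : 0 ≤ z) :
    conv1 ν b (-z) ≤ conv1 ν b z := by
  have hii : ∀ a c : ℝ, IntervalIntegrable ν volume a c := fun a c => hν.intervalIntegrable
  have hνn : Integrable (fun y => ν (-y)) := hν.comp_neg
  have hiin : ∀ a c : ℝ, IntervalIntegrable (fun y => ν (-y)) volume a c :=
    fun a c => hνn.intervalIntegrable
  have hiiD : ∀ a c : ℝ, IntervalIntegrable (fun y => ν y - ν (-y)) volume a c :=
    fun a c => (hii a c).sub (hiin a c)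
  have hrefl : conv1 ν b (-z) = (∫ y in (z-b)..(z+b), ν (-y)) / 2 := by
    unfold conv1
    rw [intervalIntegral.integral_comp_neg ν (a := z-b) (b := z+b)]
    have : -z - b = -(z+b) := by ring
    rw [this]
    have : -z + b = -(z-b) := by ring
    rw [this]
  rw [hrefl]
  unfold conv1
  have key : 0 ≤ ∫ y in (z-b)..(z+b), (ν y - ν (-y)) := by
    have hDodd : ∀ y, (fun y => ν y - ν (-y)) (-y) = - (fun y => ν y - ν (-y)) y := by
      intro y; simp only [neg_neg]; ring
    rcases le_or_gt b z with hbz | hbz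
    · apply intervalIntegral.integral_nonneg (by linarith)
      intro u hu
      have hu0 : 0 ≤ u := le_trans (by linarith) hu.1
      linarith [hfold u hu0]
    · have hsplit : (∫ y in (z-b)..(b-z), (ν y - ν (-y))) +
          (∫ y in (b-z)..(z+b), (ν y - ν (-y))) = ∫ y in (z-b)..(z+b), (ν y - ν (-y)) :=
        intervalIntegral.integral_add_adjacent_intervals (hiiD _ _) (hiiD _ _)
      have h1 : (∫ y in (z-b)..(b-z), (ν y - ν (-y))) = 0 := by
        have := odd_interval_zero (D := fun y => ν y - ν (-y)) hDodd (b-z)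
        rw [show -(b-z) = z-b by ring] at this
        exact this
      have h2 : 0 ≤ ∫ y in (b-z)..(z+b), (ν y - ν (-y)) := by
        apply intervalIntegral.integral_nonneg (by linarith)
        intro u hu
        have hu0 : 0 ≤ u := le_trans (by linarith) hu.1
        linarith [hfold u hu0]
      linarith
  rw [intervalIntegral.integral_sub (hii _ _) (hiin _ _)] at key
  linarith

lemma conv1_supp (ν : ℝ → ℝ) {b R : ℝ} (hb : 0 < b) (hR : ∀ y, R < |y| → ν y = 0)
    {z : ℝ} (hz : R + b < |z|) : conv1 ν b z = 0 := by
  unfold conv1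
  have : (∫ y in (z-b)..(z+b), ν y) = ∫ y in (z-b)..(z+b), (0:ℝ) := by
    apply intervalIntegral.integral_congr
    intro y hy
    rw [Set.uIcc_of_le (by linarith)] at hy
    apply hR
    rcases abs_cases z with ⟨h1, h2⟩ | ⟨h1, h2⟩
    · have : R + b < z := by linarith [hz, h1]
      calc R < z - b := by linarith
        _ ≤ y := hy.1
        _ ≤ |y| := le_abs_self y
    · have : R + b < -z := by linarith [hz]
      have hy2 : y ≤ z + b := hy.2
      have : y < -R := by linarith
      calc R < -y := by linarith
        _ ≤ |y| := neg_le_abs y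
  simp [this]

lemma conv1_bound (ν : ℝ → ℝ) {b : ℝ} (hb : 0 < b) (hν : Integrable ν) (z : ℝ) :
    ‖conv1 ν b z‖ ≤ (∫ y, ‖ν y‖) / 2 := by
  unfold conv1
  rw [norm_div, norm_two]
  apply div_le_div_of_nonneg_right ?_ (by norm_num)
  calc ‖∫ y in (z-b)..(z+b), ν y‖ ≤ ∫ y in (z-b)..(z+b), ‖ν y‖ :=
        intervalIntegral.norm_integral_le_integral_norm (by linarith)
    _ = ∫ y in Set.Ioc (z-b) (z+b), ‖ν y‖ := intervalIntegral.integral_of_le (by linarith)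
    _ ≤ ∫ y, ‖ν y‖ := setIntegral_le_integral hν.norm (Filter.Eventually.of_forall fun y => norm_nonneg _)

lemma conv1_integrable (ν : ℝ → ℝ) {b R : ℝ} (hb : 0 < b) (hν : Integrable ν)
    (hR : ∀ y, R < |y| → ν y = 0) : Integrable (conv1 ν b) := by
  have hcont := conv1_cont ν b hν
  have hsupp : Function.support (conv1 ν b) ⊆ Set.Icc (-(R+b)) (R+b) := by
    intro z hzne
    by_contra hmem
    apply hzne
    apply conv1_supp ν hb hR
    rcases abs_cases z with ⟨h1, h2⟩ | ⟨h1, h2⟩ <;>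
      (simp only [Set.mem_Icc, not_and_or, not_le] at hmem; rcases hmem with h | h <;> [linarith; linarith])
  rw [← integrableOn_iff_integrable_of_support_subset hsupp]
  apply Measure.integrableOn_of_bounded (M := (∫ y, ‖ν y‖) / 2)
  · exact ne_of_lt (measure_Icc_lt_top)
  · exact hcont.aestronglyMeasurable
  · exact Filter.Eventually.of_forall fun z => conv1_bound ν hb hν z

lemma sin_mul_sinc' (b y t : ℝ) (hb : 0 < b) :
    Real.sin (y*t) * (b * _root_.sinc (b*t)) =
      ∫ z, (Set.Ioc (y-b) (y+b)).indicator (fun w => Real.sin (w*t) / 2) z := by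
  rw [integral_indicator measurableSet_Ioc, ← intervalIntegral.integral_of_le (by linarith : y-b ≤ y+b)]
  exact sin_mul_sinc b y t hb

lemma isRep_base {c b : ℝ} (hc : 0 < c) (hb : 0 < b) :
    IsRep (fun t => Real.sin (c*t) * (b * _root_.sinc (b*t)))
      ((Set.Ioc (c-b) (c+b)).indicator (fun _ => (1:ℝ)/2)) := by
  constructor
  · rw [integrable_indicator_iff measurableSet_Ioc]
    exact integrableOn_const measure_Ioc_lt_top.ne
  · exact measurable_const.indicator measurableSet_Ioc
  · exact fun y => Set.indicator_nonneg (fun _ _ => by norm_num) y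
  · intro y hy
    by_cases h : -y ∈ Set.Ioc (c-b) (c+b)
    · have h' : y ∈ Set.Ioc (c-b) (c+b) := by
        simp only [Set.mem_Ioc] at h ⊢
        constructor <;> linarith [h.1, h.2]
      rw [Set.indicator_of_mem h, Set.indicator_of_mem h']
    · rw [Set.indicator_of_notMem h]
      exact Set.indicator_nonneg (fun _ _ => by norm_num) y
  · refine ⟨|c| + b, fun y hy => Set.indicator_of_notMem (fun hmem => ?_) _⟩
    rw [Set.mem_Ioc] at hmem
    have h1 : y ≤ |c| + b := le_trans hmem.2 (by linarith [le_abs_self c])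
    have h2 : -(|c|+b) ≤ y := by linarith [hmem.1, neg_abs_le c]
    have := abs_le.2 ⟨h2, h1⟩
    linarith
  · intro t
    rw [sin_mul_sinc' b c t hb]
    congr 1
    funext z
    by_cases h : z ∈ Set.Ioc (c-b) (c+b)
    · rw [Set.indicator_of_mem h, Set.indicator_of_mem h]; ring
    · rw [Set.indicator_of_notMem h, Set.indicator_of_notMem h]; ring

lemma isRep_step {f : ℝ → ℝ} {ν : ℝ → ℝ} (h : IsRep f ν) {b : ℝ} (hb : 0 < b) :
    IsRep (fun t => f t * (b * _root_.sinc (b*t))) (conv1 ν b) := by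
  obtain ⟨R, hR⟩ := h.supp
  refine ⟨conv1_integrable ν hb h.integrable hR, (conv1_cont ν b h.integrable).measurable,
    conv1_nonneg ν hb h.nonneg, fun z hz => conv1_fold ν hb h.integrable h.fold hz,
    ⟨R + b, fun z hz => conv1_supp ν hb hR hz⟩, ?_⟩
  intro t
  set S : Set (ℝ × ℝ) := {p : ℝ × ℝ | p.1 - b < p.2 ∧ p.2 ≤ p.1 + b} with hS
  have hSmeas : MeasurableSet S :=
    (measurableSet_lt (measurable_fst.sub_const b) measurable_snd).inter
      (measurableSet_le measurable_snd (measurable_fst.add_const b))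
  set F : ℝ × ℝ → ℝ := fun p => ν p.1 * S.indicator (fun q => Real.sin (q.2 * t) / 2) p with hF
  have hFmeas : Measurable F := by
    apply (h.measurable.comp measurable_fst).mul
    exact Measurable.indicator (((measurable_snd.mul_const t).sin).div_const 2) hSmeas
  have hFG : ∀ y z, F (y, z) = ν y * (Set.Ioc (y-b) (y+b)).indicator (fun w => Real.sin (w*t) / 2) z := by
    intro y z
    simp only [hF, Set.indicator_apply, Set.mem_setOf_eq, Set.mem_Ioc, hS]
  have hGint : ∀ y : ℝ, Integrable (fun z => (Set.Ioc (y-b) (y+b)).indicator (fun w => Real.sin (w*t) / 2) z) := by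
    intro y
    rw [integrable_indicator_iff measurableSet_Ioc]
    exact (((Real.continuous_sin.comp (continuous_id.mul continuous_const)).div_const 2)).integrableOn_Ioc
  have hFint : Integrable (Function.uncurry fun y z => F (y, z)) (volume.prod volume) := by
    apply (integrable_prod_iff hFmeas.aestronglyMeasurable).2
    constructor
    · refine Filter.Eventually.of_forall (fun y => ?_)
      simp only [hFG]
      exact (hGint y).const_mul _
    · apply Integrable.mono' (h.integrable.norm.const_mul b)
      · exact (hFmeas.aestronglyMeasurable.norm).integral_prod_right'
      · refine Filter.Eventually.of_forall (fun y => ?_)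
        have hnn : 0 ≤ ∫ z, ‖F (y, z)‖ := integral_nonneg (fun z => norm_nonneg _)
        rw [Real.norm_of_nonneg hnn]
        have hle : ∀ z, ‖F (y, z)‖ ≤ ‖ν y‖ * (Set.Ioc (y-b) (y+b)).indicator (fun _ => (1:ℝ)/2) z := by
          intro z
          rw [hFG, norm_mul]
          apply mul_le_mul_of_nonneg_left ?_ (norm_nonneg _) |>.trans_eq rfl
          by_cases hz : z ∈ Set.Ioc (y-b) (y+b)
          · rw [Set.indicator_of_mem hz, Set.indicator_of_mem hz, Real.norm_eq_abs, abs_div]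
            rw [show |(2:ℝ)| = 2 by norm_num]
            exact div_le_div_of_nonneg_right (Real.abs_sin_le_one _) (by norm_num) |>.trans (le_refl _)
          · rw [Set.indicator_of_notMem hz, Set.indicator_of_notMem hz, norm_zero]
        calc (∫ z, ‖F (y, z)‖) ≤ ∫ z, ‖ν y‖ * (Set.Ioc (y-b) (y+b)).indicator (fun _ => (1:ℝ)/2) z := by
              apply integral_mono_of_nonneg (Filter.Eventually.of_forall fun z => norm_nonneg _)
                (((integrable_indicator_iff measurableSet_Ioc).2
                  (integrableOn_const measure_Ioc_lt_top.ne)).const_mul _)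
                (Filter.Eventually.of_forall hle)
          _ = b * ‖ν y‖ := by
              rw [integral_const_mul, integral_indicator_const _ measurableSet_Ioc]
              simp only [smul_eq_mul, measureReal_def, Real.volume_Ioc]
              rw [show y + b - (y - b) = 2*b by ring, ENNReal.toReal_ofReal (by linarith)]
              ring
  show f t * (b * _root_.sinc (b*t)) = _
  calc f t * (b * _root_.sinc (b*t))
      = (∫ y, ν y * Real.sin (y*t)) * (b * _root_.sinc (b*t)) := by rw [h.rep t]
    _ = ∫ y, ν y * Real.sin (y*t) * (b * _root_.sinc (b*t)) := (integral_mul_const _ _).symm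
    _ = ∫ y, ∫ z, F (y, z) := by
        congr 1; funext y
        rw [mul_assoc, sin_mul_sinc' b y t hb, ← integral_const_mul]
        exact integral_congr_ae (Filter.Eventually.of_forall fun z => (hFG y z).symm)
    _ = ∫ z, ∫ y, F (y, z) := integral_integral_swap hFint
    _ = ∫ z, conv1 ν b z * Real.sin (z*t) := by
        congr 1; funext z
        have hpt : ∀ y, F (y, z) = (Set.Ico (z-b) (z+b)).indicator ν y * (Real.sin (z*t)/2) := by
          intro y
          simp only [hF, Set.indicator_apply, Set.mem_setOf_eq, Set.mem_Ico, hS]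
          split_ifs with h1 h2 h2
          · ring
          · exact absurd ⟨by linarith [h1.2], by linarith [h1.1]⟩ h2
          · exact absurd ⟨by linarith [h2.2], by linarith [h2.1]⟩ h1
          · ring
        simp only [hpt]
        rw [integral_mul_const, integral_indicator measurableSet_Ico,
          integral_Ico_eq_integral_Ioo, ← integral_Ioc_eq_integral_Ioo,
          ← intervalIntegral.integral_of_le (by linarith : z-b ≤ z+b)]
        unfold conv1
        ring

lemma laplace_sin {ε : ℝ} (hε : 0 < ε) (y : ℝ) :
    ∫ t in Set.Ioi (0:ℝ), Real.exp (-(ε*t)) * Real.sin (y*t) = y / (ε^2 + y^2) := by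
  have hden : (0:ℝ) < ε^2 + y^2 := by positivity
  set Fa : ℝ → ℝ := fun t =>
    -(Real.exp (-(ε*t)) * (ε * Real.sin (y*t) + y * Real.cos (y*t))) / (ε^2 + y^2) with hFa
  have hderiv : ∀ t : ℝ, HasDerivAt Fa (Real.exp (-(ε*t)) * Real.sin (y*t)) t := by
    intro t
    have h1 : HasDerivAt (fun t : ℝ => -(ε*t)) (-ε) t := by
      simpa using ((hasDerivAt_id t).const_mul ε).fun_neg
    have hexp : HasDerivAt (fun t : ℝ => Real.exp (-(ε*t))) (Real.exp (-(ε*t)) * (-ε)) t :=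
      h1.exp
    have hy : HasDerivAt (fun t : ℝ => y*t) y t := by
      simpa using (hasDerivAt_id t).const_mul y
    have hsin : HasDerivAt (fun t : ℝ => Real.sin (y*t)) (Real.cos (y*t) * y) t := hy.sin
    have hcos : HasDerivAt (fun t : ℝ => Real.cos (y*t)) (-Real.sin (y*t) * y) t := hy.cos
    have hcomb := ((hexp.mul ((hsin.const_mul ε).add (hcos.const_mul y))).neg).div_const
      (ε^2 + y^2)
    convert hcomb using 1
    · rfl
    · rfl
    · rfl
    · simp only [Pi.add_apply]
      rw [eq_div_iff hden.ne']
      ring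
  have hcont : ContinuousWithinAt Fa (Set.Ici 0) 0 :=
    (hderiv 0).continuousAt.continuousWithinAt
  have hint : IntegrableOn (fun t => Real.exp (-(ε*t)) * Real.sin (y*t)) (Set.Ioi 0) := by
    apply Integrable.mono' (exp_neg_integrableOn_Ioi 0 hε)
    · exact (((Real.continuous_exp.comp (continuous_const.mul continuous_id).neg)).mul
        (Real.continuous_sin.comp (continuous_const.mul continuous_id))).aestronglyMeasurable
    · refine Filter.Eventually.of_forall (fun t => ?_)
      rw [norm_mul, Real.norm_eq_abs, Real.norm_eq_abs, Real.abs_exp, neg_mul]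
      calc Real.exp (-(ε*t)) * |Real.sin (y*t)| ≤ Real.exp (-(ε*t)) * 1 :=
            mul_le_mul_of_nonneg_left (Real.abs_sin_le_one _) (Real.exp_nonneg _)
        _ = Real.exp (-(ε*t)) := mul_one _
  have htend : Filter.Tendsto Fa Filter.atTop (nhds 0) := by
    apply squeeze_zero_norm (a := fun t => Real.exp (-(ε*t)) * ((ε + |y|) / (ε^2+y^2)))
    · intro t
      rw [hFa]
      rw [Real.norm_eq_abs, abs_div, abs_neg, abs_mul, Real.abs_exp,
        abs_of_pos hden, div_eq_mul_inv, div_eq_mul_inv, mul_assoc]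
      apply mul_le_mul_of_nonneg_left ?_ (Real.exp_nonneg _)
      apply mul_le_mul_of_nonneg_right ?_ (by positivity)
      calc |ε * Real.sin (y*t) + y * Real.cos (y*t)|
          ≤ |ε * Real.sin (y*t)| + |y * Real.cos (y*t)| := abs_add_le _ _
        _ ≤ ε * 1 + |y| * 1 := by
            rw [abs_mul, abs_mul, abs_of_pos hε]
            exact add_le_add (mul_le_mul_of_nonneg_left (Real.abs_sin_le_one _) hε.le)
              (mul_le_mul_of_nonneg_left (Real.abs_cos_le_one _) (abs_nonneg _))
        _ = ε + |y| := by ring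
    · rw [show (0:ℝ) = 0 * ((ε + |y|) / (ε^2+y^2)) by ring]
      apply Filter.Tendsto.mul_const
      exact Real.tendsto_exp_neg_atTop_nhds_zero.comp
        (Filter.Tendsto.const_mul_atTop hε Filter.tendsto_id)
  have := integral_Ioi_of_hasDerivAt_of_tendsto hcont (fun x _ => hderiv x) hint htend
  rw [this, hFa]
  simp [Real.exp_zero]
  field_simp

lemma key_eps {f ν : ℝ → ℝ} (h : IsRep f ν) {ε : ℝ} (hε : 0 < ε) :
    0 ≤ ∫ t in Set.Ioi (0:ℝ), Real.exp (-(ε*t)) * f t := by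
  set k : ℝ → ℝ := fun y => y / (ε^2 + y^2) with hk
  have hden : ∀ y : ℝ, (0:ℝ) < ε^2 + y^2 := fun y => by positivity
  have hkodd : ∀ x : ℝ, k (-x) = - k x := by
    intro x
    simp only [hk, neg_sq]
    rw [neg_div]
  have hkbdd : ∀ y : ℝ, ‖k y‖ ≤ 1/(2*ε) := by
    intro y
    rw [Real.norm_eq_abs, hk, abs_div, abs_of_pos (hden y), div_le_div_iff₀ (hden y) (by linarith)]
    nlinarith [sq_nonneg (|y| - ε), sq_abs y]
  have hkmeas : Measurable k := (measurable_id.div ((measurable_id.pow_const 2).const_add (ε^2)))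
  have hik : Integrable (fun y => ν y * k y) := by
    have := Integrable.bdd_mul (f := k) (g := ν) h.integrable hkmeas.aestronglyMeasurable
      (Filter.Eventually.of_forall hkbdd)
    apply this.congr
    exact Filter.Eventually.of_forall (fun y => mul_comm _ _)
  set K : ℝ → ℝ → ℝ := fun t y => Real.exp (-(ε*t)) * (ν y * Real.sin (y*t)) with hK
  have hKmeas : Measurable (Function.uncurry K) := by
    apply Measurable.mul
    · exact ((measurable_fst.const_mul ε).neg).exp
    · exact (h.measurable.comp measurable_snd).mul
        ((measurable_snd.mul measurable_fst).sin)
  have hCnn : (0:ℝ) ≤ ∫ y, ‖ν y‖ := integral_nonneg fun y => norm_nonneg _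
  have hKint : Integrable (Function.uncurry K)
      ((volume.restrict (Set.Ioi (0:ℝ))).prod volume) := by
    apply (integrable_prod_iff hKmeas.aestronglyMeasurable).2
    constructor
    · refine Filter.Eventually.of_forall (fun t => ?_)
      simp only [Function.uncurry, hK]
      have : Integrable (fun y => ν y * Real.sin (y*t)) := by
        have := Integrable.bdd_mul (f := fun y => Real.sin (y*t)) (g := ν) h.integrable
          ((measurable_id.mul_const t).sin.aestronglyMeasurable)
          (Filter.Eventually.of_forall fun y => by rw [Real.norm_eq_abs]; exact Real.abs_sin_le_one _)
        apply this.congr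
        exact Filter.Eventually.of_forall (fun y => mul_comm _ _)
      exact this.const_mul _
    · apply Integrable.mono' ((exp_neg_integrableOn_Ioi 0 hε).mul_const (∫ y, ‖ν y‖))
      · exact (hKmeas.aestronglyMeasurable.norm).integral_prod_right'
      · refine Filter.Eventually.of_forall (fun t => ?_)
        simp only [Function.uncurry, hK]
        have hnn : 0 ≤ ∫ y, ‖K t y‖ := integral_nonneg fun y => norm_nonneg _
        rw [Real.norm_of_nonneg hnn]
        calc (∫ y, ‖K t y‖) ≤ ∫ y, Real.exp (-(ε*t)) * ‖ν y‖ := by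
              apply integral_mono_of_nonneg (Filter.Eventually.of_forall fun y => norm_nonneg _)
                (h.integrable.norm.const_mul _)
              refine Filter.Eventually.of_forall (fun y => ?_)
              simp only [hK, norm_mul, Real.norm_eq_abs, Real.abs_exp]
              calc Real.exp (-(ε*t)) * (|ν y| * |Real.sin (y*t)|)
                  ≤ Real.exp (-(ε*t)) * (|ν y| * 1) := by
                    apply mul_le_mul_of_nonneg_left ?_ (Real.exp_nonneg _)
                    exact mul_le_mul_of_nonneg_left (Real.abs_sin_le_one _) (abs_nonneg _)
                _ = Real.exp (-(ε*t)) * |ν y| := by ring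
            _ = Real.exp (-ε*t) * ∫ y, ‖ν y‖ := by
              rw [integral_const_mul, neg_mul]
  have hstep : ∫ t in Set.Ioi (0:ℝ), Real.exp (-(ε*t)) * f t = ∫ y, ν y * k y := by
    calc ∫ t in Set.Ioi (0:ℝ), Real.exp (-(ε*t)) * f t
        = ∫ t in Set.Ioi (0:ℝ), ∫ y, K t y := by
          refine integral_congr_ae (Filter.Eventually.of_forall (fun t => ?_))
          show Real.exp (-(ε*t)) * f t = ∫ y, K t y
          rw [h.rep t, ← integral_const_mul]
      _ = ∫ y, ∫ t in Set.Ioi (0:ℝ), K t y := integral_integral_swap hKint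
      _ = ∫ y, ν y * k y := by
          apply integral_congr_ae
          refine Filter.Eventually.of_forall (fun y => ?_)
          have : ∀ t : ℝ, K t y = ν y * (Real.exp (-(ε*t)) * Real.sin (y*t)) := by
            intro t; simp only [hK]; ring
          simp only [this]
          rw [integral_const_mul, laplace_sin hε y]
  rw [hstep]
  rw [← integral_add_compl measurableSet_Iic hik, Set.compl_Iic]
  have hrefl : ∫ y in Set.Iic (0:ℝ), ν y * k y
      = ∫ y in Set.Ioi (0:ℝ), ν (-y) * k (-y) := by
    have := integral_comp_neg_Ioi (0:ℝ) (fun y => ν y * k y)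
    rw [neg_zero] at this
    exact this.symm
  rw [hrefl]
  have hsum : (∫ y in Set.Ioi (0:ℝ), ν (-y) * k (-y)) + ∫ y in Set.Ioi (0:ℝ), ν y * k y
      = ∫ y in Set.Ioi (0:ℝ), (ν y - ν (-y)) * k y := by
    rw [← integral_add ?h1 hik.integrableOn]
    · apply setIntegral_congr_ae measurableSet_Ioi
      refine Filter.Eventually.of_forall (fun y _ => ?_)
      rw [hkodd y]
      ring
    · exact (hik.comp_neg).integrableOn
  rw [hsum]
  apply setIntegral_nonneg measurableSet_Ioi
  intro y hy
  apply mul_nonneg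
  · have := h.fold y (le_of_lt hy)
    linarith
  · exact div_nonneg (le_of_lt hy) (le_of_lt (hden y))

lemma IsRep.congr {f g ν : ℝ → ℝ} (h : IsRep f ν) (hfg : ∀ t, g t = f t) : IsRep g ν :=
  ⟨h.integrable, h.measurable, h.nonneg, h.fold, h.supp, fun t => (hfg t).trans (h.rep t)⟩

lemma isRep_prod : ∀ (m : ℕ), 1 ≤ m → ∀ (c : ℝ), 0 < c → ∀ (bv : Fin m → ℝ), (∀ j, 0 < bv j) →
    ∃ ν, IsRep (fun t => Real.sin (c*t) * ∏ j, bv j * _root_.sinc (bv j * t)) ν := by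
  intro m
  induction m with
  | zero => omega
  | succ m ih =>
    intro _ c hc bv hbv
    rcases Nat.eq_zero_or_pos m with rfl | hm
    · refine ⟨_, (isRep_base hc (hbv 0)).congr (fun t => ?_)⟩
      rw [Fin.prod_univ_one]
    · obtain ⟨ν, hν⟩ := ih hm c hc (fun j => bv j.castSucc) (fun j => hbv _)
      refine ⟨conv1 ν (bv (Fin.last m)), (isRep_step hν (hbv (Fin.last m))).congr (fun t => ?_)⟩
      rw [Fin.prod_univ_castSucc]
      ring

lemma integrable_aux (k : ℕ) (a : Fin (k+3) → ℝ) (ha : ∀ i, 0 < a i) :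
    IntegrableOn (fun t => t * ∏ i, a i * _root_.sinc (a i * t)) (Set.Ioi 0) := by
  have hmeas : Measurable (fun t : ℝ => t * ∏ i, a i * _root_.sinc (a i * t)) := by
    apply measurable_id.mul
    apply Finset.measurable_prod
    intro i _
    exact measurable_const.mul (_root_.measurable_sinc.comp (measurable_id.const_mul (a i)))
  have habs : ∀ t : ℝ, 0 < t → ∀ i : Fin (k+3), |a i * _root_.sinc (a i * t)| ≤ a i := by
    intro t ht i
    rw [abs_mul, abs_of_pos (ha i)]
    calc a i * |_root_.sinc (a i * t)| ≤ a i * 1 :=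
          mul_le_mul_of_nonneg_left (_root_.abs_sinc_le_one _) (ha i).le
      _ = a i := mul_one _
  have habs' : ∀ t : ℝ, 0 < t → ∀ i : Fin (k+3), |a i * _root_.sinc (a i * t)| ≤ 1/t := by
    intro t ht i
    have hat : 0 < a i * t := mul_pos (ha i) ht
    rw [abs_mul, abs_of_pos (ha i), sinc_eq hat.ne', abs_div, abs_of_pos hat,
      show a i * (|Real.sin (a i * t)| / (a i * t)) = |Real.sin (a i * t)| / t by
        rw [mul_div_assoc', mul_div_mul_left _ _ (ha i).ne']]
    gcongr
    exact Real.abs_sin_le_one _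
  rw [show Set.Ioi (0:ℝ) = Set.Ioc 0 1 ∪ Set.Ioi 1 from (Set.Ioc_union_Ioi_eq_Ioi zero_le_one).symm]
  apply IntegrableOn.union
  · apply Measure.integrableOn_of_bounded (M := ∏ i, a i)
    · exact ne_of_lt measure_Ioc_lt_top
    · exact hmeas.aestronglyMeasurable
    · rw [ae_restrict_iff' measurableSet_Ioc]
      refine Filter.Eventually.of_forall (fun t ht => ?_)
      rw [Real.norm_eq_abs, abs_mul, Finset.abs_prod]
      calc |t| * ∏ i, |a i * _root_.sinc (a i * t)| ≤ 1 * ∏ i, a i := by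
            apply mul_le_mul ?_ ?_ ?_ zero_le_one
            · rw [abs_of_pos ht.1]; exact ht.2
            · exact Finset.prod_le_prod (fun i _ => abs_nonneg _) (fun i _ => habs t ht.1 i)
            · exact Finset.prod_nonneg (fun i _ => abs_nonneg _)
        _ = ∏ i, a i := one_mul _
  · set P : ℝ := ∏ i : Fin k, a i.succ.succ.succ with hP
    have hPpos : 0 < P := Finset.prod_pos (fun i _ => ha _)
    apply Integrable.mono' (g := fun t => P * t ^ (-2:ℝ))
    · exact (integrableOn_Ioi_rpow_of_lt (by norm_num) zero_lt_one).const_mul P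
    · exact hmeas.aestronglyMeasurable.restrict
    · rw [ae_restrict_iff' measurableSet_Ioi]
      refine Filter.Eventually.of_forall (fun t ht => ?_)
      have ht0 : (0:ℝ) < t := lt_trans zero_lt_one ht
      have hnn3 : (0:ℝ) ≤ 1/t := by positivity
      have hprodnn : ∀ (j : ℕ) (f : Fin j → ℝ), (0:ℝ) ≤ ∏ i, |f i| :=
        fun j f => Finset.prod_nonneg (fun i _ => abs_nonneg _)
      rw [Real.norm_eq_abs, abs_mul, abs_of_pos ht0, Finset.abs_prod]
      have hsplit : (∏ i : Fin (k+3), |a i * _root_.sinc (a i * t)|)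
          ≤ (1/t) * ((1/t) * ((1/t) * P)) := by
        rw [Fin.prod_univ_succ (fun i : Fin (k+3) => |a i * _root_.sinc (a i * t)|),
          Fin.prod_univ_succ, Fin.prod_univ_succ]
        apply mul_le_mul (habs' t ht0 _) ?_ ?_ hnn3
        · apply mul_le_mul (habs' t ht0 _) ?_ ?_ hnn3
          · apply mul_le_mul (habs' t ht0 _) ?_ ?_ hnn3
            · exact Finset.prod_le_prod (fun i _ => abs_nonneg _) (fun i _ => habs t ht0 _)
            · exact hprodnn _ _
          · exact mul_nonneg (abs_nonneg _) (hprodnn _ _)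
        · exact mul_nonneg (abs_nonneg _) (mul_nonneg (abs_nonneg _) (hprodnn _ _))
      have hrpow : t ^ (-2:ℝ) = (t^2)⁻¹ := by
        rw [show (-2:ℝ) = -((2:ℕ):ℝ) by norm_num, Real.rpow_neg ht0.le, Real.rpow_natCast]
      calc t * ∏ i, |a i * _root_.sinc (a i * t)| ≤ t * ((1/t) * ((1/t) * ((1/t) * P))) :=
            mul_le_mul_of_nonneg_left hsplit ht0.le
        _ = P * (t^2)⁻¹ := by field_simp
        _ = P * t ^ (-2:ℝ) := by rw [hrpow]

/-- For `n ≥ 3` and all `aᵢ > 0`, `∫_0^∞ t ∏ᵢ aᵢ _root_.sinc(aᵢ t) dt ≥ 0`. -/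
theorem I1_nonneg (n : ℕ) (hn : 3 ≤ n) (a : Fin n → ℝ) (ha : ∀ i, 0 < a i) :
    0 ≤ ∫ t in Set.Ioi (0:ℝ), t * ∏ i, a i * _root_.sinc (a i * t) := by
  obtain ⟨k, rfl⟩ : ∃ k, n = k + 3 := ⟨n - 3, by omega⟩
  set f : ℝ → ℝ := fun t => t * ∏ i, a i * _root_.sinc (a i * t) with hf
  have hfint : IntegrableOn f (Set.Ioi 0) := integrable_aux k a ha
  obtain ⟨ν, hν⟩ := isRep_prod (k+2) (by omega) (a 0) (ha 0) (fun j => a j.succ) (fun j => ha _)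
  have hRep : IsRep f ν := by
    apply hν.congr
    intro t
    rcases eq_or_ne t 0 with rfl | ht
    · simp [hf]
    · show t * ∏ i, a i * _root_.sinc (a i * t) = _
      rw [Fin.prod_univ_succ (fun i : Fin (k+3) => a i * _root_.sinc (a i * t))]
      have h0 : t * (a 0 * _root_.sinc (a 0 * t)) = Real.sin (a 0 * t) := by
        rw [sinc_eq (mul_ne_zero (ha 0).ne' ht),
          show t * (a 0 * (Real.sin (a 0 * t) / (a 0 * t))) =
            (t * a 0) * Real.sin (a 0 * t) / (t * a 0) by ring,
          mul_div_cancel_left₀ _ (mul_ne_zero ht (ha 0).ne')]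
      calc t * ((a 0 * _root_.sinc (a 0 * t)) * ∏ j : Fin (k+2), a j.succ * _root_.sinc (a j.succ * t))
          = (t * (a 0 * _root_.sinc (a 0 * t))) * ∏ j : Fin (k+2), a j.succ * _root_.sinc (a j.succ * t) := by
            ring
        _ = _ := by rw [h0]
  have hkey : ∀ m : ℕ, 0 ≤ ∫ t in Set.Ioi (0:ℝ), Real.exp (-((1/(m+1:ℝ))*t)) * f t :=
    fun m => key_eps hRep (by positivity)
  have htend : Filter.Tendsto
      (fun m : ℕ => ∫ t in Set.Ioi (0:ℝ), Real.exp (-((1/(m+1:ℝ))*t)) * f t)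
      Filter.atTop (nhds (∫ t in Set.Ioi (0:ℝ), f t)) := by
    apply tendsto_integral_of_dominated_convergence (bound := fun t => ‖f t‖)
    · intro m
      exact ((Real.continuous_exp.comp ((continuous_const.mul continuous_id).neg)).aestronglyMeasurable.restrict).mul
        hfint.aestronglyMeasurable
    · exact hfint.norm
    · intro m
      rw [ae_restrict_iff' measurableSet_Ioi]
      refine Filter.Eventually.of_forall (fun t ht => ?_)
      rw [norm_mul, Real.norm_eq_abs (Real.exp _), Real.abs_exp]
      calc Real.exp (-((1/(m+1:ℝ))*t)) * ‖f t‖ ≤ 1 * ‖f t‖ := by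
            apply mul_le_mul_of_nonneg_right ?_ (norm_nonneg _)
            calc Real.exp (-((1/(m+1:ℝ))*t)) ≤ Real.exp 0 := by
                  apply Real.exp_le_exp.2
                  have hm : (0:ℝ) ≤ 1/(m+1:ℝ) := by positivity
                  have ht' : (0:ℝ) ≤ t := le_of_lt ht
                  nlinarith
              _ = 1 := Real.exp_zero
        _ = ‖f t‖ := one_mul _
    · refine Filter.Eventually.of_forall (fun t => ?_)
      have h1 : Filter.Tendsto (fun m : ℕ => -((1/(m+1:ℝ))*t)) Filter.atTop (nhds 0) := by
        rw [show (0:ℝ) = -(0 * t) by ring]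
        exact (tendsto_one_div_add_atTop_nhds_zero_nat.mul_const t).neg
      have h2 := (Real.continuous_exp.tendsto 0).comp h1
      rw [Real.exp_zero] at h2
      have := h2.mul_const (f t)
      rwa [one_mul] at this
  exact ge_of_tendsto' htend hkey
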